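/- (Finite-set criterion for <₁.) Let α < β be ordinals. Suppose that for all finite sets X ⊆ α and Y ⊆ [α, β) there exists a finite set Ỹ ⊆ α with X < Ỹ and an isomorphism h : X ∪ Ỹ → X ∪ Y (as substructures of R₂) fixing X pointwise and mapping Ỹ onto Y. Then α <₁ β. -/

import Mathlib

open Ordinal

noncomputable section

/-- The least epsilon number: the least fixed point of `ξ ↦ ω ^ ξ`. -/
def eps0 : Ordinal := sInf {ξ : Ordinal | Ordinal.omega0 ^ ξ = ξ}

namespace R2

/-- Terms of the language `{≤, ≤₁, ≤₂}`: existentially quantified variables,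
universally quantified variables, and parameters (ordinal constants). -/
inductive Trm : Type 1 where
  | evar : ℕ → Trm
  | avar : ℕ → Trm
  | cst  : Ordinal → Trm

def Trm.val (v w : ℕ → Ordinal) : Trm → Ordinal
  | .evar n => v n
  | .avar n => w n
  | .cst c  => c

/-- Quantifier-free formulas in the language `{≤, ≤₁, ≤₂}`. -/
inductive QF : Type 1 where
  | le  : Trm → Trm → QF
  | le1 : Trm → Trm → QF
  | le2 : Trm → Trm → QF
  | not : QF → QF
  | and : QF → QF → QF
  | or  : QF → QF → QF

def QF.eval (r1 r2 : Ordinal → Ordinal → Prop) (v w : ℕ → Ordinal) : QF → Prop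
  | .le s t  => s.val v w ≤ t.val v w
  | .le1 s t => r1 (s.val v w) (t.val v w)
  | .le2 s t => r2 (s.val v w) (t.val v w)
  | .not φ   => ¬ φ.eval r1 r2 v w
  | .and φ ψ => φ.eval r1 r2 v w ∧ ψ.eval r1 r2 v w
  | .or φ ψ  => φ.eval r1 r2 v w ∨ ψ.eval r1 r2 v w

def Trm.NoAvar : Trm → Prop
  | .avar _ => False
  | _ => True

def QF.NoAvar : QF → Prop
  | .le s t  => s.NoAvar ∧ t.NoAvar
  | .le1 s t => s.NoAvar ∧ t.NoAvar
  | .le2 s t => s.NoAvar ∧ t.NoAvar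
  | .not φ   => φ.NoAvar
  | .and φ ψ => φ.NoAvar ∧ ψ.NoAvar
  | .or φ ψ  => φ.NoAvar ∧ ψ.NoAvar

def Trm.CstBelow (δ : Ordinal) : Trm → Prop
  | .cst c => c < δ
  | _ => True

def QF.CstBelow (δ : Ordinal) : QF → Prop
  | .le s t  => s.CstBelow δ ∧ t.CstBelow δ
  | .le1 s t => s.CstBelow δ ∧ t.CstBelow δ
  | .le2 s t => s.CstBelow δ ∧ t.CstBelow δ
  | .not φ   => φ.CstBelow δ
  | .and φ ψ => φ.CstBelow δ ∧ ψ.CstBelow δ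
  | .or φ ψ  => φ.CstBelow δ ∧ ψ.CstBelow δ

/-- Satisfaction of a Σ₁-formula (an existential block in front of a
quantifier-free formula without universal variables) in the segment of
ordinals `< δ`, with the indicated interpretations of `≤₁` and `≤₂`. -/
def Sat1 (r1 r2 : Ordinal → Ordinal → Prop) (δ : Ordinal) (φ : QF) : Prop :=
  ∃ v : ℕ → Ordinal, (∀ n, v n < δ) ∧ φ.eval r1 r2 v v

/-- Satisfaction of a Σ₂-formula (a block of existential quantifiers followed
by a block of universal quantifiers in front of a quantifier-free formula) in
the segment of ordinals `< δ`. -/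
def Sat2 (r1 r2 : Ordinal → Ordinal → Prop) (δ : Ordinal) (φ : QF) : Prop :=
  ∃ v : ℕ → Ordinal, (∀ n, v n < δ) ∧
    ∀ w : ℕ → Ordinal, (∀ n, w n < δ) → φ.eval r1 r2 v w

/-- `(α; ≤, ≤₁, ≤₂)` is a Σ₁-elementary substructure of `(β; ≤, ≤₁, ≤₂)`:
Σ₁-sentences with parameters `< α` hold in `α` iff they hold in `β`. -/
def Sig1Elem (r1 r2 : Ordinal → Ordinal → Prop) (α β : Ordinal) : Prop :=
  ∀ φ : QF, φ.NoAvar → φ.CstBelow α → (Sat1 r1 r2 α φ ↔ Sat1 r1 r2 β φ)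

/-- `(α; ≤, ≤₁, ≤₂)` is a Σ₂-elementary substructure of `(β; ≤, ≤₁, ≤₂)`. -/
def Sig2Elem (r1 r2 : Ordinal → Ordinal → Prop) (α β : Ordinal) : Prop :=
  ∀ φ : QF, φ.CstBelow α → (Sat2 r1 r2 α φ ↔ Sat2 r1 r2 β φ)

/-- The simultaneous recursive (in `β`) definition of `α ≤₁ β` (`i = false`)
and `α ≤₂ β` (`i = true`): `α ≤ᵢ β` iff `α ≤ β` and `(α; ≤, ≤₁, ≤₂)` is a
Σᵢ-elementary substructure of `(β; ≤, ≤₁, ≤₂)`, where the relations `≤₁, ≤₂`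
are the restrictions to the segment below `β`, already defined by recursion. -/
noncomputable def leAux : Ordinal → Bool → Ordinal → Prop :=
  WellFounded.fix Ordinal.lt_wf fun β IH i α =>
    α ≤ β ∧
      (match i with
        | false => Sig1Elem
        | true  => Sig2Elem)
        (fun x y => ∃ h : y < β, IH y h false x)
        (fun x y => ∃ h : y < β, IH y h true x) α β

/-- `α ≤₁ β` in the structure `R₂`. -/
def le1 (α β : Ordinal) : Prop := leAux β false α

/-- `α ≤₂ β` in the structure `R₂`. -/
def le2 (α β : Ordinal) : Prop := leAux β true α

def lt1 (α β : Ordinal) : Prop := le1 α β ∧ α < β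

def lt2 (α β : Ordinal) : Prop := le2 α β ∧ α < β

/-- `h` is an isomorphism (w.r.t. `≤, ≤₁, ≤₂`) on the set `A`. -/
def IsoOn (h : Ordinal → Ordinal) (A : Set Ordinal) : Prop :=
  ∀ x ∈ A, ∀ y ∈ A,
    (x ≤ y ↔ h x ≤ h y) ∧ (le1 x y ↔ le1 (h x) (h y)) ∧ (le2 x y ↔ le2 (h x) (h y))

end R2

namespace R2

/-- The list of terms occurring in a quantifier-free formula. -/
def QF.trms : QF → List Trm
  | .le s t  => [s, t]
  | .le1 s t => [s, t]
  | .le2 s t => [s, t]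
  | .not φ   => φ.trms
  | .and φ ψ => φ.trms ++ ψ.trms
  | .or φ ψ  => φ.trms ++ ψ.trms

lemma trms_cstBelow {δ : Ordinal} : ∀ φ : QF, φ.CstBelow δ → ∀ t ∈ φ.trms, t.CstBelow δ := by
  intro φ
  induction φ with
  | le s t => rintro ⟨hs, ht⟩ u hu; simp [QF.trms] at hu; rcases hu with rfl | rfl <;> assumption
  | le1 s t => rintro ⟨hs, ht⟩ u hu; simp [QF.trms] at hu; rcases hu with rfl | rfl <;> assumption
  | le2 s t => rintro ⟨hs, ht⟩ u hu; simp [QF.trms] at hu; rcases hu with rfl | rfl <;> assumption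
  | not φ ih => exact ih
  | and φ ψ ih1 ih2 =>
      rintro ⟨h1, h2⟩ u hu
      simp [QF.trms] at hu
      rcases hu with hu | hu
      · exact ih1 h1 u hu
      · exact ih2 h2 u hu
  | or φ ψ ih1 ih2 =>
      rintro ⟨h1, h2⟩ u hu
      simp [QF.trms] at hu
      rcases hu with hu | hu
      · exact ih1 h1 u hu
      · exact ih2 h2 u hu

lemma eval_congr (r1 r2 r1' r2' : Ordinal → Ordinal → Prop)
    (v w v' w' : ℕ → Ordinal) :
    ∀ φ : QF,
      (∀ s ∈ φ.trms, ∀ t ∈ φ.trms,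
        (s.val v w ≤ t.val v w ↔ s.val v' w' ≤ t.val v' w') ∧
        (r1 (s.val v w) (t.val v w) ↔ r1' (s.val v' w') (t.val v' w')) ∧
        (r2 (s.val v w) (t.val v w) ↔ r2' (s.val v' w') (t.val v' w'))) →
      (φ.eval r1 r2 v w ↔ φ.eval r1' r2' v' w') := by
  intro φ
  induction φ with
  | le s t =>
      intro hH
      simpa [QF.eval] using (hH s (by simp [QF.trms]) t (by simp [QF.trms])).1
  | le1 s t =>
      intro hH
      simpa [QF.eval] using (hH s (by simp [QF.trms]) t (by simp [QF.trms])).2.1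
  | le2 s t =>
      intro hH
      simpa [QF.eval] using (hH s (by simp [QF.trms]) t (by simp [QF.trms])).2.2
  | not φ ih =>
      intro hH
      simp only [QF.eval]
      exact not_congr (ih hH)
  | and φ ψ ih1 ih2 =>
      intro hH
      simp only [QF.eval]
      exact and_congr
        (ih1 fun s hs t ht => hH s (by simp [QF.trms, hs]) t (by simp [QF.trms, ht]))
        (ih2 fun s hs t ht => hH s (by simp [QF.trms, hs]) t (by simp [QF.trms, ht]))
  | or φ ψ ih1 ih2 =>
      intro hH
      simp only [QF.eval]
      exact or_congr
        (ih1 fun s hs t ht => hH s (by simp [QF.trms, hs]) t (by simp [QF.trms, ht]))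
        (ih2 fun s hs t ht => hH s (by simp [QF.trms, hs]) t (by simp [QF.trms, ht]))

lemma le1_iff (α β : Ordinal) :
    le1 α β ↔ α ≤ β ∧
      Sig1Elem (fun x y => ∃ _ : y < β, le1 x y) (fun x y => ∃ _ : y < β, le2 x y) α β := by
  unfold le1 le2 leAux
  rw [WellFounded.fix_eq]

end R2

/-- Finite-set criterion for `<₁` in `R₂`. -/
theorem lt1_of_finite_set_criterion (α β : Ordinal) (hαβ : α < β)
    (H : ∀ X Y : Finset Ordinal, (∀ x ∈ X, x < α) → (∀ y ∈ Y, α ≤ y ∧ y < β) →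
      ∃ Ytil : Finset Ordinal, (∀ y ∈ Ytil, y < α) ∧ (∀ x ∈ X, ∀ y ∈ Ytil, x < y) ∧
        ∃ h : Ordinal → Ordinal,
          Set.BijOn h ↑(X ∪ Ytil) ↑(X ∪ Y) ∧ (∀ x ∈ X, h x = x) ∧
          h '' ↑Ytil = ↑Y ∧ R2.IsoOn h ↑(X ∪ Ytil)) :
    R2.lt1 α β := by
  classical
  -- α is positive
  have hα0 : 0 < α := by
    obtain ⟨Yt, hYt, -, h, hbij, -, -, -⟩ :=
      H ∅ {α} (by simp) (by simp [le_refl, hαβ])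
    have hmem : α ∈ ((↑((∅ : Finset Ordinal) ∪ {α}) : Set Ordinal)) := by simp
    obtain ⟨x, hx, -⟩ := hbij.surjOn hmem
    rw [Finset.empty_union] at hx
    exact (zero_le (a := x)).trans_lt (hYt x hx)
  refine ⟨?_, hαβ⟩
  rw [R2.le1_iff]
  refine ⟨hαβ.le, ?_⟩
  intro φ hna hcb
  constructor
  · rintro ⟨v, hv, he⟩
    exact ⟨v, fun n => (hv n).trans hαβ, he⟩
  · rintro ⟨v, hv, he⟩
    -- values of the terms of φ
    set vals : List Ordinal := φ.trms.map (R2.Trm.val v v) with hvals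
    have hvalsβ : ∀ z ∈ vals, z < β := by
      intro z hz
      rw [hvals, List.mem_map] at hz
      obtain ⟨t, ht, rfl⟩ := hz
      cases t with
      | evar n => exact hv n
      | avar n => exact hv n
      | cst c => exact (R2.trms_cstBelow φ hcb _ ht).trans hαβ
    set X : Finset Ordinal := vals.toFinset.filter (· < α) with hX
    set Y : Finset Ordinal := vals.toFinset.filter (fun z => ¬ z < α) with hY
    have hXα : ∀ x ∈ X, x < α := by
      intro x hx; rw [hX, Finset.mem_filter] at hx; exact hx.2
    have hYαβ : ∀ y ∈ Y, α ≤ y ∧ y < β := by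
      intro y hy; rw [hY, Finset.mem_filter] at hy
      exact ⟨not_lt.1 hy.2, hvalsβ y (List.mem_toFinset.1 hy.1)⟩
    obtain ⟨Yt, hYtα, -, h, hbij, hfix, -, hiso⟩ := H X Y hXα hYαβ
    set S : Set Ordinal := ↑(X ∪ Yt) with hS
    set T : Set Ordinal := ↑(X ∪ Y) with hT
    have hSα : ∀ x ∈ S, x < α := by
      intro x hx
      rw [hS, Finset.coe_union, Set.mem_union] at hx
      rcases hx with hx | hx
      · exact hXα x hx
      · exact hYtα x hx
    set g : Ordinal → Ordinal := Function.invFunOn h S with hg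
    have hinv : Set.InvOn g h S T := hbij.invOn_invFunOn
    have hmt : Set.MapsTo g T S := hbij.surjOn.mapsTo_invFunOn
    have hhg : ∀ y ∈ T, h (g y) = y := fun y hy => hinv.2 hy
    -- g fixes X
    have hgfix : ∀ x ∈ X, g x = x := by
      intro x hx
      have hxS : x ∈ S := by
        rw [hS, Finset.coe_union, Set.mem_union]; exact Or.inl hx
      have := hinv.1 hxS
      rwa [hfix x hx] at this
    -- values of terms lie in T
    have hvalsT : ∀ z ∈ vals, z ∈ T := by
      intro z hz
      rw [hT, Finset.coe_union, Set.mem_union]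
      by_cases hzα : z < α
      · exact Or.inl (by rw [hX]; exact Finset.mem_filter.2 ⟨List.mem_toFinset.2 hz, hzα⟩)
      · exact Or.inr (by rw [hY]; exact Finset.mem_filter.2 ⟨List.mem_toFinset.2 hz, hzα⟩)
    set v' : ℕ → Ordinal := fun n => if v n ∈ T then g (v n) else 0 with hv'
    have hv'α : ∀ n, v' n < α := by
      intro n
      show (if v n ∈ T then g (v n) else 0) < α
      split
      · exact hSα _ (hmt (by assumption))
      · exact hα0
    refine ⟨v', hv'α, ?_⟩
    have hterm : ∀ t ∈ φ.trms, R2.Trm.val v' v' t = g (R2.Trm.val v v t) := by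
      intro t ht
      have htT : R2.Trm.val v v t ∈ T :=
        hvalsT _ (by rw [hvals, List.mem_map]; exact ⟨t, ht, rfl⟩)
      cases t with
      | evar n => simp only [R2.Trm.val] at htT ⊢; rw [hv']; simp [htT]
      | avar n => simp only [R2.Trm.val] at htT ⊢; rw [hv']; simp [htT]
      | cst c =>
          simp only [R2.Trm.val] at htT ⊢
          have hc : c ∈ X := by
            rw [hX]
            refine Finset.mem_filter.2 ⟨?_, (R2.trms_cstBelow φ hcb _ ht : _)⟩
            exact List.mem_toFinset.2 (by rw [hvals, List.mem_map]; exact ⟨.cst c, ht, rfl⟩)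
          exact (hgfix c hc).symm
    refine (R2.eval_congr _ _ _ _ v v v' v' φ ?_).mp he
    intro s hs t ht
    have hsT : R2.Trm.val v v s ∈ T :=
      hvalsT _ (by rw [hvals, List.mem_map]; exact ⟨s, hs, rfl⟩)
    have htT : R2.Trm.val v v t ∈ T :=
      hvalsT _ (by rw [hvals, List.mem_map]; exact ⟨t, ht, rfl⟩)
    have hsS : g (R2.Trm.val v v s) ∈ S := hmt hsT
    have htS : g (R2.Trm.val v v t) ∈ S := hmt htT
    have hI := hiso _ hsS _ htS
    rw [hhg _ hsT, hhg _ htT] at hI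
    rw [hterm s hs, hterm t ht]
    have hsβ : R2.Trm.val v v t < β := by
      refine hvalsβ _ ?_
      rw [hvals, List.mem_map]; exact ⟨t, ht, rfl⟩
    have htβ' : g (R2.Trm.val v v t) < β := (hSα _ htS).trans hαβ
    refine ⟨hI.1.symm, ?_, ?_⟩
    · constructor
      · rintro ⟨-, h1⟩; exact ⟨htβ', hI.2.1.mpr h1⟩
      · rintro ⟨-, h1⟩; exact ⟨hsβ, hI.2.1.mp h1⟩
    · constructor
      · rintro ⟨-, h2⟩; exact ⟨htβ', hI.2.2.mpr h2⟩
      · rintro ⟨-, h2⟩; exact ⟨hsβ, hI.2.2.mp h2⟩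

end
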